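/- Let λ > 0, let T_1, …, T_n be independent exponentially distributed random variables with rate λ, and let c_1, …, c_n be real constants. Let M := max_{1 ≤ i ≤ n} (T_i − c_i) and let N := #{i : T_i − c_i ≥ M − 1}. Then for every integer t ≥ 1, P[N ≥ t] ≤ (1 − e^{−λ})^{t−1}. -/

import Mathlib

open MeasureTheory ProbabilityTheory Set
open scoped Classical ENNReal

namespace Stmt10Aux

noncomputable def Ef (lam a : ℝ) : ℝ := Real.exp (-(lam * max a 0))

lemma Ef_pos (lam a : ℝ) : 0 < Ef lam a := Real.exp_pos _

lemma key_exp {lam : ℝ} (hlam : 0 < lam) (a : ℝ) :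
    Real.exp (-lam) * Ef lam a ≤ Ef lam (a + 1) := by
  rw [Ef, Ef, ← Real.exp_add]
  apply Real.exp_le_exp.2
  rcases le_or_gt 0 a with h | h
  · rw [max_eq_left h, max_eq_left (by linarith)]; ring_nf; linarith
  · rw [max_eq_right h.le]
    rcases le_or_gt 0 (a + 1) with h1 | h1
    · rw [max_eq_left h1]; nlinarith
    · rw [max_eq_right h1.le]; nlinarith

variable {Ω : Type} [MeasurableSpace Ω] {μ : Measure Ω} [IsProbabilityMeasure μ]
  {lam : ℝ} {T : Ω → ℝ}

lemma surv_gt (hlam : 0 < lam)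
    (hexp : ∀ s : ℝ, 0 ≤ s → μ {ω | s < T ω} = ENNReal.ofReal (Real.exp (-(lam * s))))
    (a : ℝ) : μ (T ⁻¹' Ioi a) = ENNReal.ofReal (Ef lam a) := by
  have hpre : T ⁻¹' Ioi a = {ω | a < T ω} := rfl
  rcases le_or_gt 0 a with h | h
  · rw [hpre, Ef, max_eq_left h]; exact hexp a h
  · rw [hpre, Ef, max_eq_right h.le]
    have h0 : μ {ω | (0:ℝ) < T ω} = 1 := by
      have := hexp 0 le_rfl; simpa using this
    have hsub : {ω | (0:ℝ) < T ω} ⊆ {ω | a < T ω} := fun ω hω => lt_trans h hω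
    have h1 : μ {ω | a < T ω} = 1 :=
      le_antisymm prob_le_one (h0 ▸ measure_mono hsub)
    rw [h1, mul_zero, neg_zero, Real.exp_zero, ENNReal.ofReal_one]

lemma surv_ge_ge (hlam : 0 < lam)
    (hexp : ∀ s : ℝ, 0 ≤ s → μ {ω | s < T ω} = ENNReal.ofReal (Real.exp (-(lam * s))))
    (a : ℝ) : ENNReal.ofReal (Ef lam a) ≤ μ (T ⁻¹' Ici a) := by
  rw [← surv_gt hlam hexp a]
  exact measure_mono (preimage_mono Ioi_subset_Ici_self)

lemma surv_ge_le (hlam : 0 < lam)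
    (hexp : ∀ s : ℝ, 0 ≤ s → μ {ω | s < T ω} = ENNReal.ofReal (Real.exp (-(lam * s))))
    (a : ℝ) : μ (T ⁻¹' Ici a) ≤ ENNReal.ofReal (Ef lam a) := by
  rcases le_or_gt a 0 with h | h
  · rw [Ef, max_eq_right h, mul_zero, neg_zero, Real.exp_zero, ENNReal.ofReal_one]
    exact prob_le_one
  · rw [Ef, max_eq_left h.le]
    have hne : μ (T ⁻¹' Ici a) ≠ ⊤ := measure_ne_top μ _
    set R := (μ (T ⁻¹' Ici a)).toReal with hR
    have hr : ∀ b : ℝ, 0 ≤ b → b < a → R ≤ Real.exp (-(lam * b)) := by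
      intro b hb0 hba
      have hsub : T ⁻¹' Ici a ⊆ {ω | b < T ω} := fun ω hω => lt_of_lt_of_le hba hω
      have hle : μ (T ⁻¹' Ici a) ≤ ENNReal.ofReal (Real.exp (-(lam * b))) :=
        (measure_mono hsub).trans_eq (hexp b hb0)
      have := ENNReal.toReal_mono ENNReal.ofReal_ne_top hle
      rwa [ENNReal.toReal_ofReal (Real.exp_nonneg _)] at this
    have htend : Filter.Tendsto (fun b : ℝ => Real.exp (-(lam * b)))
        (nhdsWithin a (Iio a)) (nhds (Real.exp (-(lam * a)))) :=
      ((Real.continuous_exp.comp (by continuity)).tendsto a).mono_left nhdsWithin_le_nhds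
    have hev : ∀ᶠ b in nhdsWithin a (Iio a), R ≤ Real.exp (-(lam * b)) := by
      filter_upwards [Ioo_mem_nhdsLT_of_mem (show a ∈ Ioc (0:ℝ) a from ⟨h, le_rfl⟩)] with b hb
      exact hr b hb.1.le hb.2
    have hRle : R ≤ Real.exp (-(lam * a)) := ge_of_tendsto htend hev
    calc μ (T ⁻¹' Ici a) = ENNReal.ofReal R := (ENNReal.ofReal_toReal hne).symm
      _ ≤ ENNReal.ofReal (Real.exp (-(lam * a))) := ENNReal.ofReal_le_ofReal hRle

lemma ofReal_diff_le {lam : ℝ} (hlam : 0 < lam) (a : ℝ) :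
    ENNReal.ofReal (Ef lam a) - ENNReal.ofReal (Ef lam (a + 1)) ≤
      ENNReal.ofReal (1 - Real.exp (-lam)) * ENNReal.ofReal (Ef lam a) := by
  have he1 : Real.exp (-lam) < 1 := by
    rw [← Real.exp_zero]; exact Real.exp_lt_exp.2 (by linarith)
  rw [← ENNReal.ofReal_mul (by linarith)]
  rw [tsub_le_iff_right, ← ENNReal.ofReal_add (by nlinarith [Ef_pos lam a]) (Ef_pos lam (a+1)).le]
  apply ENNReal.ofReal_le_ofReal
  nlinarith [key_exp hlam a]

lemma fac_Ioc (hlam : 0 < lam) (hT : Measurable T)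
    (hexp : ∀ s : ℝ, 0 ≤ s → μ {ω | s < T ω} = ENNReal.ofReal (Real.exp (-(lam * s))))
    (a : ℝ) : μ (T ⁻¹' Ioc a (a + 1)) ≤
      ENNReal.ofReal (1 - Real.exp (-lam)) * ENNReal.ofReal (Ef lam a) := by
  have hset : T ⁻¹' Ioc a (a + 1) = T ⁻¹' Ioi a \ T ⁻¹' Ioi (a + 1) := by
    ext ω; simp only [mem_preimage, mem_Ioc, mem_diff, mem_Ioi, not_lt]
  have hd := measure_diff (μ := μ)
    (preimage_mono (Ioi_subset_Ioi (by linarith : a ≤ a + 1)) : T ⁻¹' Ioi (a+1) ⊆ T ⁻¹' Ioi a)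
    ((hT measurableSet_Ioi).nullMeasurableSet) (measure_ne_top μ _)
  rw [hset, hd, surv_gt hlam hexp, surv_gt hlam hexp]
  exact ofReal_diff_le hlam a

lemma fac_Icc (hlam : 0 < lam) (hT : Measurable T)
    (hexp : ∀ s : ℝ, 0 ≤ s → μ {ω | s < T ω} = ENNReal.ofReal (Real.exp (-(lam * s))))
    (a : ℝ) : μ (T ⁻¹' Icc a (a + 1)) ≤
      ENNReal.ofReal (1 - Real.exp (-lam)) * ENNReal.ofReal (Ef lam a) := by
  have hset : T ⁻¹' Icc a (a + 1) = T ⁻¹' Ici a \ T ⁻¹' Ioi (a + 1) := by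
    ext ω; simp only [mem_preimage, mem_Icc, mem_diff, mem_Ici, mem_Ioi, not_lt]
  have hd := measure_diff (μ := μ)
    (preimage_mono (Ioi_subset_Ici_self.trans (Ici_subset_Ici.2 (by linarith : a ≤ a + 1)))
      : T ⁻¹' Ioi (a+1) ⊆ T ⁻¹' Ici a)
    ((hT measurableSet_Ioi).nullMeasurableSet) (measure_ne_top μ _)
  rw [hset, hd, surv_gt hlam hexp]
  calc μ (T ⁻¹' Ici a) - ENNReal.ofReal (Ef lam (a + 1))
      ≤ ENNReal.ofReal (Ef lam a) - ENNReal.ofReal (Ef lam (a + 1)) :=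
        tsub_le_tsub_right (surv_ge_le hlam hexp a) _
    _ ≤ _ := ofReal_diff_le hlam a


/-- Tie-broken strict order on (value, index) pairs. -/
def ltv (a : ℝ) (i : ℕ) (b : ℝ) (k : ℕ) : Prop := a < b ∨ (a = b ∧ i < k)

lemma ltv_irrefl {a : ℝ} {i : ℕ} : ¬ ltv a i a i := by simp [ltv]

lemma ltv_asymm {a b : ℝ} {i k : ℕ} (h : ltv a i b k) : ¬ ltv b k a i := by
  rcases h with h | ⟨h1, h2⟩ <;> rintro (h' | ⟨h1', h2'⟩) <;> first | linarith | omega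

lemma ltv_trans {a b d : ℝ} {i k l : ℕ} (h : ltv a i b k) (h' : ltv b k d l) : ltv a i d l := by
  rcases h with h | ⟨h1, h2⟩ <;> rcases h' with h' | ⟨h1', h2'⟩
  · exact Or.inl (lt_trans h h')
  · exact Or.inl (h1' ▸ h)
  · exact Or.inl (h1 ▸ h')
  · exact Or.inr ⟨h1.trans h1', h2.trans h2'⟩

lemma ltv_total {a b : ℝ} {i k : ℕ} (h : i ≠ k) : ltv a i b k ∨ ltv b k a i := by
  rcases lt_trichotomy a b with h' | h' | h'
  · exact Or.inl (Or.inl h')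
  · rcases lt_or_gt_of_ne h with hik | hik
    · exact Or.inl (Or.inr ⟨h', hik⟩)
    · exact Or.inr (Or.inr ⟨h'.symm, hik⟩)
  · exact Or.inr (Or.inl h')

lemma ltv_of_lex {a b : ℝ} {i k : ℕ} (h : toLex (a, i) < toLex (b, k)) : ltv a i b k :=
  Prod.Lex.lt_iff.1 h

lemma exists_ltv_max {N : ℕ} (X : Fin N → ℝ) (Q : Finset (Fin N)) (hQ : Q.Nonempty) :
    ∃ j ∈ Q, ∀ i ∈ Q, i ≠ j → ltv (X i) i (X j) j := by
  obtain ⟨j, hjQ, hj⟩ := Finset.exists_max_image Q (fun i => toLex (X i, (i : ℕ))) hQ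
  refine ⟨j, hjQ, fun i hi hij => ?_⟩
  refine ltv_of_lex (lt_of_le_of_ne (hj i hi) fun he => hij ?_)
  have := congrArg Prod.snd (toLex_inj.mp he)
  exact Fin.val_injective this

lemma exists_ltv_min {N : ℕ} (X : Fin N → ℝ) (Q : Finset (Fin N)) (hQ : Q.Nonempty) :
    ∃ j ∈ Q, ∀ i ∈ Q, i ≠ j → ltv (X j) j (X i) i := by
  obtain ⟨j, hjQ, hj⟩ := Finset.exists_min_image Q (fun i => toLex (X i, (i : ℕ))) hQ
  refine ⟨j, hjQ, fun i hi hij => ?_⟩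
  refine ltv_of_lex (lt_of_le_of_ne (hj i hi) fun he => hij ?_)
  have := congrArg Prod.snd (toLex_inj.mp he)
  exact (Fin.val_injective this).symm

lemma exists_topset {N : ℕ} (X : Fin N → ℝ) :
    ∀ s, s ≤ N → ∃ K : Finset (Fin N), K.card = s ∧
      ∀ i ∈ K, ∀ k, k ∉ K → ltv (X k) k (X i) i := by
  intro s
  induction s with
  | zero => exact fun _ => ⟨∅, by simp⟩
  | succ s ih =>
    intro hs
    obtain ⟨K, hKcard, hK⟩ := ih (by omega)
    have hne : (Finset.univ \ K).Nonempty := by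
      rw [← Finset.card_pos, Finset.card_sdiff_of_subset (Finset.subset_univ K)]
      simp only [Finset.card_univ, Fintype.card_fin]
      omega
    obtain ⟨k₀, hk₀mem, hk₀⟩ := exists_ltv_max X (Finset.univ \ K) hne
    have hk₀K : k₀ ∉ K := (Finset.mem_sdiff.1 hk₀mem).2
    refine ⟨insert k₀ K, by rw [Finset.card_insert_of_notMem hk₀K, hKcard], ?_⟩
    intro i hi k hk
    have hkK : k ∉ K := fun h => hk (Finset.mem_insert_of_mem h)
    have hkk₀ : k ≠ k₀ := fun h => hk (h ▸ Finset.mem_insert_self _ _)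
    rcases Finset.mem_insert.1 hi with rfl | hiK
    · exact hk₀ k (Finset.mem_sdiff.2 ⟨Finset.mem_univ k, hkK⟩) hkk₀
    · exact hK i hiK k hkK

/-- C-slices: conditions on the value of `T i` given `T j = x`. -/
noncomputable def slC {N : ℕ} (c : Fin N → ℝ) (S : Finset (Fin N)) (j i : Fin N) (x : ℝ) :
    Set ℝ :=
  if i ∈ S then
    (if j < i then Icc (x - c j + c i) (x - c j + c i + 1)
     else Ioc (x - c j + c i) (x - c j + c i + 1))
  else (if i < j then Iic (x - c j + c i) else Iio (x - c j + c i))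

/-- E-slices. -/
noncomputable def slE {N : ℕ} (c : Fin N → ℝ) (S : Finset (Fin N)) (j i : Fin N) (x : ℝ) :
    Set ℝ :=
  if i ∈ S then (if j < i then Ici (x - c j + c i) else Ioi (x - c j + c i))
  else (if i < j then Iic (x - c j + c i) else Iio (x - c j + c i))

lemma msle (f g : ℝ × ℝ → ℝ) (hf : Measurable f) (hg : Measurable g) :
    MeasurableSet {q : ℝ × ℝ | f q ≤ g q} := measurableSet_le hf hg

lemma mslt (f g : ℝ × ℝ → ℝ) (hf : Measurable f) (hg : Measurable g) :
    MeasurableSet {q : ℝ × ℝ | f q < g q} := measurableSet_lt hf hg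

lemma slC_prod_meas {N : ℕ} (c : Fin N → ℝ) (S : Finset (Fin N)) (j i : Fin N) :
    MeasurableSet {q : ℝ × ℝ | q.2 ∈ slC c S j i q.1} := by
  unfold slC
  split_ifs
  · have h : {q : ℝ × ℝ | q.2 ∈ Icc (q.1 - c j + c i) (q.1 - c j + c i + 1)}
        = {q : ℝ × ℝ | q.1 - c j + c i ≤ q.2} ∩ {q : ℝ × ℝ | q.2 ≤ q.1 - c j + c i + 1} := by
      ext q; simp [Set.mem_Icc]
    rw [h]
    exact (msle _ _ (by fun_prop) (by fun_prop)).inter (msle _ _ (by fun_prop) (by fun_prop))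
  · have h : {q : ℝ × ℝ | q.2 ∈ Ioc (q.1 - c j + c i) (q.1 - c j + c i + 1)}
        = {q : ℝ × ℝ | q.1 - c j + c i < q.2} ∩ {q : ℝ × ℝ | q.2 ≤ q.1 - c j + c i + 1} := by
      ext q; simp [Set.mem_Ioc]
    rw [h]
    exact (mslt _ _ (by fun_prop) (by fun_prop)).inter (msle _ _ (by fun_prop) (by fun_prop))
  · have h : {q : ℝ × ℝ | q.2 ∈ Iic (q.1 - c j + c i)}
        = {q : ℝ × ℝ | q.2 ≤ q.1 - c j + c i} := by ext q; simp
    rw [h]; exact msle _ _ (by fun_prop) (by fun_prop)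
  · have h : {q : ℝ × ℝ | q.2 ∈ Iio (q.1 - c j + c i)}
        = {q : ℝ × ℝ | q.2 < q.1 - c j + c i} := by ext q; simp
    rw [h]; exact mslt _ _ (by fun_prop) (by fun_prop)

lemma slE_prod_meas {N : ℕ} (c : Fin N → ℝ) (S : Finset (Fin N)) (j i : Fin N) :
    MeasurableSet {q : ℝ × ℝ | q.2 ∈ slE c S j i q.1} := by
  unfold slE
  split_ifs
  · have h : {q : ℝ × ℝ | q.2 ∈ Ici (q.1 - c j + c i)}
        = {q : ℝ × ℝ | q.1 - c j + c i ≤ q.2} := by ext q; simp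
    rw [h]; exact msle _ _ (by fun_prop) (by fun_prop)
  · have h : {q : ℝ × ℝ | q.2 ∈ Ioi (q.1 - c j + c i)}
        = {q : ℝ × ℝ | q.1 - c j + c i < q.2} := by ext q; simp
    rw [h]; exact mslt _ _ (by fun_prop) (by fun_prop)
  · have h : {q : ℝ × ℝ | q.2 ∈ Iic (q.1 - c j + c i)}
        = {q : ℝ × ℝ | q.2 ≤ q.1 - c j + c i} := by ext q; simp
    rw [h]; exact msle _ _ (by fun_prop) (by fun_prop)
  · have h : {q : ℝ × ℝ | q.2 ∈ Iio (q.1 - c j + c i)}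
        = {q : ℝ × ℝ | q.2 < q.1 - c j + c i} := by ext q; simp
    rw [h]; exact mslt _ _ (by fun_prop) (by fun_prop)

lemma calc_pi {Ω : Type} [MeasurableSpace Ω] (μ : Measure Ω) [IsProbabilityMeasure μ] (m : ℕ)
    (T : Fin (m + 1) → Ω → ℝ) (hmeas : ∀ i, Measurable (T i))
    (hpi : μ.map (fun ω i => T i ω) = Measure.pi (fun i => μ.map (T i)))
    (j : Fin (m + 1)) (B : Fin (m + 1) → ℝ → Set ℝ)
    (hB : ∀ i, MeasurableSet {q : ℝ × ℝ | q.2 ∈ B i q.1}) :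
    μ (⋂ k : Fin m, {ω | T (j.succAbove k) ω ∈ B (j.succAbove k) (T j ω)})
      = ∫⁻ x, ∏ k : Fin m, (μ.map (T (j.succAbove k))) (B (j.succAbove k) x) ∂(μ.map (T j)) := by
  haveI : ∀ i, IsProbabilityMeasure (μ.map (T i)) :=
    fun i => Measure.isProbabilityMeasure_map (hmeas i).aemeasurable
  set e := MeasurableEquiv.piFinSuccAbove (fun _ : Fin (m + 1) => ℝ) j with he
  set D : Set (ℝ × (Fin m → ℝ)) := {q | ∀ k, q.2 k ∈ B (j.succAbove k) q.1} with hD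
  have hBx : ∀ i x, MeasurableSet (B i x) := by
    intro i x
    have : B i x = Prod.mk x ⁻¹' {q : ℝ × ℝ | q.2 ∈ B i q.1} := by ext v; simp
    rw [this]; exact (hB i).preimage (measurable_prodMk_left)
  have hDmeas : MeasurableSet D := by
    have : D = ⋂ k : Fin m, (fun q : ℝ × (Fin m → ℝ) => (q.1, q.2 k)) ⁻¹'
        {q : ℝ × ℝ | q.2 ∈ B (j.succAbove k) q.1} := by
      ext q; simp [hD]
    rw [this]
    exact MeasurableSet.iInter fun k =>
      (hB _).preimage (measurable_fst.prodMk ((measurable_pi_apply k).comp measurable_snd))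
  have hset : (⋂ k : Fin m, {ω | T (j.succAbove k) ω ∈ B (j.succAbove k) (T j ω)})
      = (fun ω i => T i ω) ⁻¹' (e ⁻¹' D) := by
    ext ω
    simp only [Set.mem_iInter, Set.mem_setOf_eq, Set.mem_preimage]
    exact Iff.rfl
  rw [hset, ← Measure.map_apply (measurable_pi_lambda _ fun i => hmeas i) (e.measurable hDmeas),
    hpi, (measurePreserving_piFinSuccAbove (fun i => μ.map (T i)) j).measure_preimage
      hDmeas.nullMeasurableSet,
    Measure.prod_apply hDmeas]
  refine lintegral_congr fun x => ?_
  have hsl : (Prod.mk x ⁻¹' D) = Set.pi Set.univ (fun k => B (j.succAbove k) x) := by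
    ext z; simp [hD, Set.mem_pi]
  rw [hsl, Measure.pi_pi]


def CsetD {Ω : Type} (m : ℕ) (T : Fin (m + 1) → Ω → ℝ) (c : Fin (m + 1) → ℝ)
    (p : Fin (m + 1) × Finset (Fin (m + 1))) : Set Ω :=
  ⋂ k : Fin m, {ω | T (p.1.succAbove k) ω ∈ slC c p.2 p.1 (p.1.succAbove k) (T p.1 ω)}

def EsetD {Ω : Type} (m : ℕ) (T : Fin (m + 1) → Ω → ℝ) (c : Fin (m + 1) → ℝ)
    (p : Fin (m + 1) × Finset (Fin (m + 1))) : Set Ω :=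
  ⋂ k : Fin m, {ω | T (p.1.succAbove k) ω ∈ slE c p.2 p.1 (p.1.succAbove k) (T p.1 ω)}

lemma EsetD_meas {Ω : Type} [MeasurableSpace Ω] (m : ℕ) (T : Fin (m + 1) → Ω → ℝ)
    (c : Fin (m + 1) → ℝ) (hmeas : ∀ i, Measurable (T i))
    (p : Fin (m + 1) × Finset (Fin (m + 1))) : MeasurableSet (EsetD m T c p) := by
  refine MeasurableSet.iInter fun k => ?_
  have h : {ω | T (p.1.succAbove k) ω ∈ slE c p.2 p.1 (p.1.succAbove k) (T p.1 ω)} =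
      (fun ω => (T p.1 ω, T (p.1.succAbove k) ω)) ⁻¹'
        {q : ℝ × ℝ | q.2 ∈ slE c p.2 p.1 (p.1.succAbove k) q.1} := rfl
  rw [h]
  exact (slE_prod_meas c p.2 p.1 (p.1.succAbove k)).preimage
    ((hmeas p.1).prodMk (hmeas (p.1.succAbove k)))

lemma Cset_bound {Ω : Type} [MeasurableSpace Ω] (μ : Measure Ω) [IsProbabilityMeasure μ]
    {lam : ℝ} (hlam : 0 < lam) (m : ℕ) (T : Fin (m + 1) → Ω → ℝ) (c : Fin (m + 1) → ℝ)
    (hmeas : ∀ i, Measurable (T i))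
    (hpi : μ.map (fun ω i => T i ω) = Measure.pi (fun i => μ.map (T i)))
    (hexp : ∀ i, ∀ s : ℝ, 0 ≤ s → μ {ω | s < T i ω} = ENNReal.ofReal (Real.exp (-(lam * s))))
    (j : Fin (m + 1)) (S : Finset (Fin (m + 1))) (hjS : j ∉ S) :
    μ (CsetD m T c (j, S)) ≤
      ENNReal.ofReal (1 - Real.exp (-lam)) ^ S.card * μ (EsetD m T c (j, S)) := by
  haveI : ∀ i, IsProbabilityMeasure (μ.map (T i)) :=
    fun i => Measure.isProbabilityMeasure_map (hmeas i).aemeasurable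
  have hcount : (Finset.univ.filter fun k : Fin m => j.succAbove k ∈ S).card = S.card := by
    apply Finset.card_bij (fun k _ => j.succAbove k)
    · intro k hk; exact (Finset.mem_filter.1 hk).2
    · intro k1 _ k2 _ he; exact Fin.succAbove_right_injective he
    · intro b hb
      have hbj : b ≠ j := fun h => hjS (h ▸ hb)
      obtain ⟨k, hk⟩ := Fin.exists_succAbove_eq hbj
      exact ⟨k, Finset.mem_filter.2 ⟨Finset.mem_univ _, by rw [hk]; exact hb⟩, hk⟩
  rw [CsetD, EsetD]
  rw [calc_pi μ m T hmeas hpi j (fun i x => slC c S j i x) (fun i => slC_prod_meas c S j i),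
    calc_pi μ m T hmeas hpi j (fun i x => slE c S j i x) (fun i => slE_prod_meas c S j i),
    ← lintegral_const_mul' _ _ (ENNReal.pow_ne_top ENNReal.ofReal_ne_top)]
  refine lintegral_mono fun x => ?_
  have hfac : ∀ k : Fin m,
      (μ.map (T (j.succAbove k))) (slC c S j (j.succAbove k) x) ≤
        (if j.succAbove k ∈ S then ENNReal.ofReal (1 - Real.exp (-lam)) else 1) *
          (μ.map (T (j.succAbove k))) (slE c S j (j.succAbove k) x) := by
    intro k
    set i := j.succAbove k with hi
    by_cases hiS : i ∈ S
    · rw [if_pos hiS]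
      simp only [slC, slE, if_pos hiS]
      by_cases hji : j < i
      · rw [if_pos hji, if_pos hji,
          Measure.map_apply (hmeas i) measurableSet_Icc,
          Measure.map_apply (hmeas i) measurableSet_Ici]
        calc μ (T i ⁻¹' Icc (x - c j + c i) (x - c j + c i + 1))
            ≤ ENNReal.ofReal (1 - Real.exp (-lam)) * ENNReal.ofReal (Ef lam (x - c j + c i)) :=
              fac_Icc hlam (hmeas i) (hexp i) _
          _ ≤ _ := mul_le_mul_right (surv_ge_ge hlam (hexp i) _) _
      · rw [if_neg hji, if_neg hji,
          Measure.map_apply (hmeas i) measurableSet_Ioc,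
          Measure.map_apply (hmeas i) measurableSet_Ioi]
        calc μ (T i ⁻¹' Ioc (x - c j + c i) (x - c j + c i + 1))
            ≤ ENNReal.ofReal (1 - Real.exp (-lam)) * ENNReal.ofReal (Ef lam (x - c j + c i)) :=
              fac_Ioc hlam (hmeas i) (hexp i) _
          _ ≤ _ := mul_le_mul_right (surv_gt hlam (hexp i) _).ge _
    · rw [if_neg hiS, one_mul]
      simp only [slC, slE, if_neg hiS]
      exact le_rfl
  calc ∏ k : Fin m, (μ.map (T (j.succAbove k))) (slC c S j (j.succAbove k) x)
      ≤ ∏ k : Fin m, ((if j.succAbove k ∈ S then ENNReal.ofReal (1 - Real.exp (-lam)) else 1) *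
          (μ.map (T (j.succAbove k))) (slE c S j (j.succAbove k) x)) :=
        Finset.prod_le_prod' fun k _ => hfac k
    _ = (∏ k : Fin m, (if j.succAbove k ∈ S then ENNReal.ofReal (1 - Real.exp (-lam)) else 1)) *
          ∏ k : Fin m, (μ.map (T (j.succAbove k))) (slE c S j (j.succAbove k) x) :=
        Finset.prod_mul_distrib
    _ = ENNReal.ofReal (1 - Real.exp (-lam)) ^ S.card *
          ∏ k : Fin m, (μ.map (T (j.succAbove k))) (slE c S j (j.succAbove k) x) := by
        rw [Finset.prod_ite, Finset.prod_const, Finset.prod_const, one_pow, mul_one, hcount]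

lemma EsetD_disj {Ω : Type} (m : ℕ) (T : Fin (m + 1) → Ω → ℝ) (c : Fin (m + 1) → ℝ)
    (p q : Fin (m + 1) × Finset (Fin (m + 1))) (hP : p.1 ∉ p.2) (hQ : q.1 ∉ q.2)
    (hcards : p.2.card = q.2.card) (hpq : p ≠ q) :
    Disjoint (EsetD m T c p) (EsetD m T c q) := by
  refine Set.disjoint_left.2 fun ω h1 h2 => ?_
  have hch : ∀ (j : Fin (m + 1)) (S : Finset (Fin (m + 1))), j ∉ S → ω ∈ EsetD m T c (j, S) →
      ∀ i, i ∈ S ↔ ltv (T j ω - c j) j (T i ω - c i) i := by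
    intro j S hjS hω i
    have hprop : ∀ i : Fin (m + 1), i ≠ j →
        (i ∈ S → ltv (T j ω - c j) j (T i ω - c i) i) ∧
        (i ∉ S → ltv (T i ω - c i) i (T j ω - c j) j) := by
      intro i hij
      obtain ⟨k, hk⟩ := Fin.exists_succAbove_eq hij
      have hmem := Set.mem_iInter.1 hω k
      rw [Set.mem_setOf_eq, hk] at hmem
      constructor
      · intro hiS
        rw [slE, if_pos hiS] at hmem
        by_cases hji : j < i
        · rw [if_pos hji] at hmem
          rw [Set.mem_Ici] at hmem
          rcases lt_or_eq_of_le (show T j ω - c j ≤ T i ω - c i by linarith) with h | h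
          · exact Or.inl h
          · exact Or.inr ⟨h, Fin.lt_iff_val_lt_val.1 hji⟩
        · rw [if_neg hji] at hmem
          rw [Set.mem_Ioi] at hmem
          exact Or.inl (by linarith)
      · intro hiS
        rw [slE, if_neg hiS] at hmem
        by_cases hij2 : i < j
        · rw [if_pos hij2] at hmem
          rw [Set.mem_Iic] at hmem
          rcases lt_or_eq_of_le (show T i ω - c i ≤ T j ω - c j by linarith) with h | h
          · exact Or.inl h
          · exact Or.inr ⟨h, Fin.lt_iff_val_lt_val.1 hij2⟩
        · rw [if_neg hij2] at hmem
          rw [Set.mem_Iio] at hmem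
          exact Or.inl (by linarith)
    constructor
    · intro hiS
      exact (hprop i (fun h => hjS (h ▸ hiS))).1 hiS
    · intro hlt
      have hij : i ≠ j := by rintro rfl; exact ltv_irrefl hlt
      by_contra hni
      exact ltv_asymm hlt ((hprop i hij).2 hni)
  obtain ⟨j1, S1⟩ := p
  obtain ⟨j2, S2⟩ := q
  simp only at hP hQ hcards
  have hch1 := hch j1 S1 hP h1
  have hch2 := hch j2 S2 hQ h2
  by_cases hjj : j1 = j2
  · subst hjj
    have hSS : S1 = S2 := Finset.ext fun i => (hch1 i).trans (hch2 i).symm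
    exact hpq (by rw [hSS])
  · have aux : ∀ (ja jb : Fin (m + 1)) (Sa Sb : Finset (Fin (m + 1))),
        Sa.card ≤ Sb.card → jb ∉ Sb →
        (∀ i, i ∈ Sa ↔ ltv (T ja ω - c ja) ja (T i ω - c i) i) →
        (∀ i, i ∈ Sb ↔ ltv (T jb ω - c jb) jb (T i ω - c i) i) →
        ltv (T ja ω - c ja) ja (T jb ω - c jb) jb → False := by
      intro ja jb Sa Sb hcard hjb hca hcb hlt
      have hsub : insert jb Sb ⊆ Sa := by
        intro i hi
        rcases Finset.mem_insert.1 hi with rfl | hiSb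
        · exact (hca i).2 hlt
        · exact (hca i).2 (ltv_trans hlt ((hcb i).1 hiSb))
      have hle := Finset.card_le_card hsub
      rw [Finset.card_insert_of_notMem hjb] at hle
      omega
    have hne : (j1 : ℕ) ≠ (j2 : ℕ) := fun h => hjj (Fin.val_injective h)
    rcases ltv_total (a := T j1 ω - c j1) (b := T j2 ω - c j2) hne with h | h
    · exact aux j1 j2 S1 S2 hcards.le hQ hch1 hch2 h
    · exact aux j2 j1 S2 S1 hcards.ge hP hch2 hch1 h

end Stmt10Aux

open Stmt10Aux

/-- Let `T 1, …, T n` be independent exponential random variables with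
rate `λ > 0` and `c i` real constants. With `M = max_i (T i - c i)` and
`N = #{i : T i - c i ≥ M - 1}`, for every integer `t ≥ 1` we have
`P[N ≥ t] ≤ (1 - e^{-λ})^{t-1}`. -/
theorem stmt_10 {Ω : Type} [MeasurableSpace Ω] (μ : Measure Ω) [IsProbabilityMeasure μ]
    (lam : ℝ) (hlam : 0 < lam) (n : ℕ) (hn : 0 < n)
    (T : Fin n → Ω → ℝ) (c : Fin n → ℝ)
    (hmeas : ∀ i, Measurable (T i))
    (hindep : iIndepFun T μ)
    (hexp : ∀ i, ∀ t : ℝ, 0 ≤ t →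
      μ {ω | t < T i ω} = ENNReal.ofReal (Real.exp (-(lam * t))))
    (t : ℕ) (ht : 1 ≤ t) :
    μ {ω | t ≤ (Finset.univ.filter fun i : Fin n =>
        (⨆ j : Fin n, (T j ω - c j)) - 1 ≤ T i ω - c i).card} ≤
      ENNReal.ofReal ((1 - Real.exp (-lam)) ^ (t - 1)) := by
  classical
  have hexp1 : Real.exp (-lam) < 1 := by
    rw [← Real.exp_zero]; exact Real.exp_lt_exp.2 (by linarith)
  rcases le_or_gt t n with htn | htn
  · obtain ⟨m, rfl⟩ : ∃ m, n = m + 1 := ⟨n - 1, by omega⟩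
    haveI : ∀ i, IsProbabilityMeasure (μ.map (T i)) :=
      fun i => Measure.isProbabilityMeasure_map (hmeas i).aemeasurable
    have hpi : μ.map (fun ω i => T i ω) = Measure.pi (fun i => μ.map (T i)) := by
      refine (Measure.pi_eq fun s hs => ?_).symm
      rw [Measure.map_apply (measurable_pi_lambda _ fun i => hmeas i) (MeasurableSet.univ_pi hs)]
      have hss : (fun ω i => T i ω) ⁻¹' Set.pi Set.univ s = ⋂ i, T i ⁻¹' s i := by
        ext ω; simp [Set.mem_pi]
      rw [hss, hindep.meas_iInter fun i => ⟨s i, hs i, rfl⟩]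
      exact Finset.prod_congr rfl fun i _ => (Measure.map_apply (hmeas i) (hs i)).symm
    set idx : Finset (Fin (m + 1) × Finset (Fin (m + 1))) :=
      Finset.univ.filter (fun p => p.1 ∉ p.2 ∧ p.2.card = t - 1) with hidx
    have hcov : {ω | t ≤ (Finset.univ.filter fun i : Fin (m + 1) =>
        (⨆ j : Fin (m + 1), (T j ω - c j)) - 1 ≤ T i ω - c i).card} ⊆
        ⋃ p ∈ idx, CsetD m T c p := by
      intro ω hω
      rw [Set.mem_setOf_eq] at hω
      obtain ⟨K, hKcard, hK⟩ := exists_topset (fun i => T i ω - c i) t htn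
      have hKne : K.Nonempty := Finset.card_pos.1 (by omega)
      obtain ⟨j, hjK, hjmin⟩ := exists_ltv_min (fun i => T i ω - c i) K hKne
      have hjS : j ∉ K.erase j := Finset.notMem_erase j K
      have hScard : (K.erase j).card = t - 1 := by rw [Finset.card_erase_of_mem hjK, hKcard]
      have hXle : ∀ i, T i ω - c i ≤ (⨆ l : Fin (m + 1), (T l ω - c l)) := fun i =>
        le_ciSup (f := fun l : Fin (m + 1) => T l ω - c l)
          (Set.Finite.bddAbove (Set.finite_range _)) i
      have hMj : (⨆ l : Fin (m + 1), (T l ω - c l)) - 1 ≤ T j ω - c j := by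
        by_contra hlt
        push_neg at hlt
        have hsub : (Finset.univ.filter fun i : Fin (m + 1) =>
            (⨆ l : Fin (m + 1), (T l ω - c l)) - 1 ≤ T i ω - c i) ⊆ K.erase j := by
          intro f hf
          rw [Finset.mem_filter] at hf
          have hff := hf.2
          have hfj : f ≠ j := by rintro rfl; linarith
          refine Finset.mem_erase.2 ⟨hfj, ?_⟩
          by_contra hfK
          rcases hK j hjK f hfK with h | ⟨h, _⟩ <;> linarith
        have hcard := Finset.card_le_card hsub
        rw [hScard] at hcard
        omega
      refine Set.mem_biUnion (x := (j, K.erase j)) ?_ ?_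
      · exact Finset.mem_filter.2 ⟨Finset.mem_univ _, hjS, hScard⟩
      · refine Set.mem_iInter.2 fun k => ?_
        rw [Set.mem_setOf_eq]
        simp only
        set i := j.succAbove k with hidef
        have hij : i ≠ j := Fin.succAbove_ne j k
        by_cases hiS : i ∈ K.erase j
        · rw [slC, if_pos hiS]
          have hlt := hjmin i (Finset.mem_of_mem_erase hiS) hij
          have hub : T i ω - c i ≤ T j ω - c j + 1 := by
            have h1 := hXle i
            linarith
          by_cases hji : j < i
          · rw [if_pos hji, Set.mem_Icc]
            rcases hlt with h | ⟨h, _⟩ <;> constructor <;> linarith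
          · rw [if_neg hji, Set.mem_Ioc]
            rcases hlt with h | ⟨h, hv⟩
            · constructor <;> linarith
            · exact absurd (Fin.lt_iff_val_lt_val.2 hv) hji
        · have hiK : i ∉ K := fun h => hiS (Finset.mem_erase.2 ⟨hij, h⟩)
          have hlt := hK j hjK i hiK
          rw [slC, if_neg hiS]
          by_cases hij2 : i < j
          · rw [if_pos hij2, Set.mem_Iic]
            rcases hlt with h | ⟨h, _⟩ <;> linarith
          · rw [if_neg hij2, Set.mem_Iio]
            rcases hlt with h | ⟨h, hv⟩
            · linarith
            · exact absurd (Fin.lt_iff_val_lt_val.2 hv) hij2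
    have hb : ∀ p ∈ idx, μ (CsetD m T c p) ≤
        ENNReal.ofReal (1 - Real.exp (-lam)) ^ (t - 1) * μ (EsetD m T c p) := by
      intro p hp
      rw [hidx, Finset.mem_filter] at hp
      have := Cset_bound μ hlam m T c hmeas hpi hexp p.1 p.2 hp.2.1
      rw [hp.2.2] at this
      exact this
    have hdisj : Set.PairwiseDisjoint (↑idx : Set (Fin (m + 1) × Finset (Fin (m + 1))))
        (EsetD m T c) := by
      intro p hp q hq hpq
      rw [Finset.mem_coe, hidx, Finset.mem_filter] at hp hq
      exact EsetD_disj m T c p q hp.2.1 hq.2.1 (hp.2.2.trans hq.2.2.symm) hpq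
    have hsum : ∑ p ∈ idx, μ (EsetD m T c p) = μ (⋃ p ∈ idx, EsetD m T c p) :=
      (measure_biUnion_finset hdisj fun p _ => EsetD_meas m T c hmeas p).symm
    calc μ {ω | t ≤ (Finset.univ.filter fun i : Fin (m + 1) =>
            (⨆ j : Fin (m + 1), (T j ω - c j)) - 1 ≤ T i ω - c i).card}
        ≤ μ (⋃ p ∈ idx, CsetD m T c p) := measure_mono hcov
      _ ≤ ∑ p ∈ idx, μ (CsetD m T c p) := measure_biUnion_finset_le idx _
      _ ≤ ∑ p ∈ idx, ENNReal.ofReal (1 - Real.exp (-lam)) ^ (t - 1) * μ (EsetD m T c p) :=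
          Finset.sum_le_sum hb
      _ = ENNReal.ofReal (1 - Real.exp (-lam)) ^ (t - 1) * ∑ p ∈ idx, μ (EsetD m T c p) :=
          (Finset.mul_sum _ _ _).symm
      _ = ENNReal.ofReal (1 - Real.exp (-lam)) ^ (t - 1) * μ (⋃ p ∈ idx, EsetD m T c p) := by
          rw [hsum]
      _ ≤ ENNReal.ofReal (1 - Real.exp (-lam)) ^ (t - 1) * 1 := mul_le_mul_right prob_le_one _
      _ = ENNReal.ofReal ((1 - Real.exp (-lam)) ^ (t - 1)) := by
          rw [mul_one, ENNReal.ofReal_pow (by linarith)]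
  · have hempty : {ω | t ≤ (Finset.univ.filter fun i : Fin n =>
        (⨆ j : Fin n, (T j ω - c j)) - 1 ≤ T i ω - c i).card} = ∅ := by
      ext ω
      simp only [Set.mem_setOf_eq, Set.mem_empty_iff_false, iff_false, not_le]
      calc (Finset.univ.filter fun i : Fin n =>
              (⨆ j : Fin n, (T j ω - c j)) - 1 ≤ T i ω - c i).card
          ≤ Finset.univ.card := Finset.card_filter_le _ _
        _ = n := by simp
        _ < t := htn
    rw [hempty, measure_empty]
    exact zero_le
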